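/- Let 1 ≤ p ≤ q ≤ ∞, β, γ ∈ ℝ, and set u(x) = x^{-β}, v(x) = x^{γ}. If sup_{t>0} ‖u‖_{L_q((0,t))} · ‖v^{-1}‖_{L_{p'}((0,1/t))} < ∞, then there exists n ∈ ℕ such that sup_{t>0} ‖x^{-n} u‖_{L_q((t,∞))} · ‖x^{-n} v^{-1}‖_{L_{p'}((1/t,∞))} < ∞. -/

import Mathlib

open MeasureTheory Set
open scoped ENNReal

/-- The `L_p` norm (with `1 ≤ p ≤ ∞`) of a real function over a set `E ⊆ ℝ`,
as an extended nonnegative real. -/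
noncomputable def Lnorm (p : ℝ≥0∞) (f : ℝ → ℝ) (E : Set ℝ) : ℝ≥0∞ :=
  if p = ∞ then essSup (fun x => ENNReal.ofReal |f x|) (volume.restrict E)
  else (∫⁻ x in E, ENNReal.ofReal |f x| ^ p.toReal) ^ (1 / p.toReal)

lemma lint_Ioo {c t : ℝ} (hc : -1 < c) (ht : 0 < t) :
    ∫⁻ x in Ioo (0:ℝ) t, ENNReal.ofReal (x ^ c) = ENNReal.ofReal (t ^ (c+1) / (c+1)) := by
  have hint : IntegrableOn (fun x : ℝ => x ^ c) (Ioo 0 t) := (intervalIntegral.integrableOn_Ioo_rpow_iff ht).2 hc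
  rw [← MeasureTheory.ofReal_integral_eq_lintegral_ofReal hint ?pos]
  case pos =>
    filter_upwards [ae_restrict_mem measurableSet_Ioo] with x hx
    exact Real.rpow_nonneg hx.1.le c
  congr 1
  have h1 : ∫ x in Ioo (0:ℝ) t, x ^ c = ∫ x in (0:ℝ)..t, x ^ c := by
    rw [intervalIntegral.integral_of_le ht.le, MeasureTheory.integral_Ioc_eq_integral_Ioo]
  rw [h1, integral_rpow (Or.inl hc), Real.zero_rpow (by linarith : c + 1 ≠ 0), sub_zero]

lemma lint_Ioo_top {c t : ℝ} (hc : c ≤ -1) (ht : 0 < t) :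
    ∫⁻ x in Ioo (0:ℝ) t, ENNReal.ofReal (x ^ c) = ⊤ := by
  by_contra h
  have hmeas : Measurable fun x : ℝ => x ^ c := measurable_id.pow measurable_const
  have hnn : 0 ≤ᵐ[volume.restrict (Ioo (0:ℝ) t)] fun x : ℝ => x ^ c := by
    filter_upwards [ae_restrict_mem measurableSet_Ioo] with x hx
    exact Real.rpow_nonneg hx.1.le c
  have hint : IntegrableOn (fun x : ℝ => x ^ c) (Ioo 0 t) :=
    ⟨hmeas.aestronglyMeasurable, (hasFiniteIntegral_iff_ofReal hnn).2 (lt_top_iff_ne_top.2 h)⟩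
  exact absurd ((intervalIntegral.integrableOn_Ioo_rpow_iff ht).1 hint) (not_lt.2 hc)

lemma lint_Ioi {c t : ℝ} (hc : c < -1) (ht : 0 < t) :
    ∫⁻ x in Ioi t, ENNReal.ofReal (x ^ c) = ENNReal.ofReal (-t ^ (c+1) / (c+1)) := by
  have hint : IntegrableOn (fun x : ℝ => x ^ c) (Ioi t) := integrableOn_Ioi_rpow_of_lt hc ht
  rw [← MeasureTheory.ofReal_integral_eq_lintegral_ofReal hint ?pos]
  case pos =>
    filter_upwards [ae_restrict_mem measurableSet_Ioi] with x hx
    exact Real.rpow_nonneg (ht.trans hx).le c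
  rw [integral_Ioi_rpow_of_lt hc ht]

lemma lint_Ioi_top {c t : ℝ} (hc : -1 ≤ c) (ht : 0 < t) :
    ∫⁻ x in Ioi t, ENNReal.ofReal (x ^ c) = ⊤ := by
  by_contra h
  have hmeas : Measurable fun x : ℝ => x ^ c := measurable_id.pow measurable_const
  have hnn : 0 ≤ᵐ[volume.restrict (Ioi t)] fun x : ℝ => x ^ c := by
    filter_upwards [ae_restrict_mem measurableSet_Ioi] with x hx
    exact Real.rpow_nonneg (ht.trans hx).le c
  have hint : IntegrableOn (fun x : ℝ => x ^ c) (Ioi t) :=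
    ⟨hmeas.aestronglyMeasurable, (hasFiniteIntegral_iff_ofReal hnn).2 (lt_top_iff_ne_top.2 h)⟩
  exact absurd ((integrableOn_Ioi_rpow_iff ht).1 hint) (not_lt.2 hc)


lemma restrict_Ioo_ne_zero {t : ℝ} (ht : 0 < t) : volume.restrict (Ioo (0:ℝ) t) ≠ 0 := by
  rw [Ne, Measure.restrict_eq_zero, Real.volume_Ioo]
  simp [ht, ENNReal.ofReal_eq_zero, not_le]

lemma restrict_Ioi_ne_zero (t : ℝ) : volume.restrict (Ioi t) ≠ 0 := by
  rw [Ne, Measure.restrict_eq_zero, Real.volume_Ioi]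
  simp

/-- Generic lower-bound tool: if an interval of positive measure inside `E` is contained in
`{x | b < f x}`, then `b < essSup f (restrict E)` fails to be ≥ ... -/
lemma essSup_lower {E S : Set ℝ} (hE : MeasurableSet E) (hSE : S ⊆ E)
    (hS : volume S ≠ 0) {f : ℝ → ℝ≥0∞}
    (hf : ∀ x ∈ S, essSup f (volume.restrict E) < f x) : False := by
  have hae : ∀ᵐ x ∂volume.restrict E, f x ≤ essSup f (volume.restrict E) := ae_le_essSup (f := f)
  have h0 : volume.restrict E {x | ¬ f x ≤ essSup f (volume.restrict E)} = 0 := hae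
  have hsub : S ⊆ {x | ¬ f x ≤ essSup f (volume.restrict E)} ∩ E := by
    intro x hx
    exact ⟨not_le.2 (hf x hx), hSE hx⟩
  rw [Measure.restrict_apply' hE] at h0
  exact hS (measure_mono_null hsub h0)

lemma ess_Ioo {a t : ℝ} (ha : 0 ≤ a) (ht : 0 < t) :
    essSup (fun x => ENNReal.ofReal (x ^ a)) (volume.restrict (Ioo (0:ℝ) t))
      = ENNReal.ofReal (t ^ a) := by
  rcases eq_or_lt_of_le ha with rfl | ha
  · simp only [Real.rpow_zero]
    exact essSup_const _ (restrict_Ioo_ne_zero ht)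
  refine le_antisymm ?_ ?_
  · refine essSup_le_of_ae_le _ ?_
    filter_upwards [ae_restrict_mem measurableSet_Ioo] with x hx
    exact ENNReal.ofReal_le_ofReal (Real.rpow_le_rpow hx.1.le hx.2.le ha.le)
  · by_contra h
    push_neg at h
    set s := essSup (fun x => ENNReal.ofReal (x ^ a)) (volume.restrict (Ioo (0:ℝ) t)) with hs
    have hsne : s ≠ ⊤ := (h.trans (ENNReal.ofReal_lt_top.trans_le le_top)).ne
    have hst : s.toReal < t ^ a := by
      rwa [ENNReal.lt_ofReal_iff_toReal_lt hsne] at h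
    set m : ℝ := (s.toReal + t ^ a) / 2 with hm
    have hm0 : 0 < m := by
      have := ENNReal.toReal_nonneg (a := s); positivity
    have hmlt : m < t ^ a := by simp only [hm]; linarith
    have hsm : s.toReal < m := by simp only [hm]; linarith
    set y : ℝ := m ^ (1/a) with hy
    have hy0 : 0 < y := Real.rpow_pos_of_pos hm0 _
    have hya : y ^ a = m := by
      rw [hy, ← Real.rpow_mul hm0.le, one_div, inv_mul_cancel₀ ha.ne', Real.rpow_one]
    have hyt : y < t := by
      have : y ^ a < t ^ a := by rw [hya]; exact hmlt
      by_contra hc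
      push_neg at hc
      exact absurd (Real.rpow_le_rpow (by positivity) hc ha.le) (not_le.2 this)
    refine essSup_lower (E := Ioo (0:ℝ) t) (S := Ioo y t) measurableSet_Ioo
      (fun x hx => ⟨hy0.trans hx.1, hx.2⟩)
      (by rw [Real.volume_Ioo]; exact (ENNReal.ofReal_pos.2 (by linarith)).ne')
      (f := fun x => ENNReal.ofReal (x ^ a)) ?_
    intro x hx
    have hxa : m < x ^ a := by
      rw [← hya]; exact Real.rpow_lt_rpow hy0.le hx.1 ha
    exact (ENNReal.lt_ofReal_iff_toReal_lt hsne).2 (hsm.trans hxa)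

lemma ess_Ioo_top {a t : ℝ} (ha : a < 0) (ht : 0 < t) :
    essSup (fun x => ENNReal.ofReal (x ^ a)) (volume.restrict (Ioo (0:ℝ) t)) = ⊤ := by
  by_contra h
  set s := essSup (fun x => ENNReal.ofReal (x ^ a)) (volume.restrict (Ioo (0:ℝ) t)) with hs
  have hsne : s ≠ ⊤ := h
  set M : ℝ := s.toReal + 1 with hM
  have hM0 : 0 < M := by have := ENNReal.toReal_nonneg (a := s); positivity
  set y : ℝ := M ^ (1/a) with hy
  have hy0 : 0 < y := Real.rpow_pos_of_pos hM0 _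
  have hya : y ^ a = M := by
    rw [hy, ← Real.rpow_mul hM0.le, one_div, inv_mul_cancel₀ ha.ne, Real.rpow_one]
  have hmin : 0 < min y t := lt_min hy0 ht
  refine essSup_lower (E := Ioo (0:ℝ) t) (S := Ioo 0 (min y t)) measurableSet_Ioo
    (fun x hx => ⟨hx.1, hx.2.trans_le (min_le_right _ _)⟩)
    (by rw [Real.volume_Ioo, sub_zero]; exact (ENNReal.ofReal_pos.2 hmin).ne')
    (f := fun x => ENNReal.ofReal (x ^ a)) ?_
  intro x hx
  have hxy : x < y := hx.2.trans_le (min_le_left _ _)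
  have hxa : M < x ^ a := by rw [← hya]; exact Real.rpow_lt_rpow_of_neg hx.1 hxy ha
  refine (ENNReal.lt_ofReal_iff_toReal_lt hsne).2 ?_
  simp only [hM] at hxa; linarith

lemma ess_Ioi {a t : ℝ} (ha : a ≤ 0) (ht : 0 < t) :
    essSup (fun x => ENNReal.ofReal (x ^ a)) (volume.restrict (Ioi t))
      = ENNReal.ofReal (t ^ a) := by
  rcases eq_or_lt_of_le ha with rfl | ha
  · simp only [Real.rpow_zero]
    exact essSup_const _ (restrict_Ioi_ne_zero t)
  refine le_antisymm ?_ ?_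
  · refine essSup_le_of_ae_le _ ?_
    filter_upwards [ae_restrict_mem measurableSet_Ioi] with x hx
    exact ENNReal.ofReal_le_ofReal (Real.rpow_le_rpow_of_nonpos ht (le_of_lt hx) ha.le)
  · by_contra h
    push_neg at h
    set s := essSup (fun x => ENNReal.ofReal (x ^ a)) (volume.restrict (Ioi t)) with hs
    have hsne : s ≠ ⊤ := (h.trans (ENNReal.ofReal_lt_top.trans_le le_top)).ne
    have hst : s.toReal < t ^ a := by
      rwa [ENNReal.lt_ofReal_iff_toReal_lt hsne] at h
    set m : ℝ := (s.toReal + t ^ a) / 2 with hm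
    have hm0 : 0 < m := by
      have := ENNReal.toReal_nonneg (a := s); positivity
    have hmlt : m < t ^ a := by simp only [hm]; linarith
    have hsm : s.toReal < m := by simp only [hm]; linarith
    set y : ℝ := m ^ (1/a) with hy
    have hy0 : 0 < y := Real.rpow_pos_of_pos hm0 _
    have hya : y ^ a = m := by
      rw [hy, ← Real.rpow_mul hm0.le, one_div, inv_mul_cancel₀ ha.ne, Real.rpow_one]
    have hyt : t < y := by
      have h1 : y ^ a < t ^ a := by rw [hya]; exact hmlt
      by_contra hc
      push_neg at hc
      exact absurd (Real.rpow_le_rpow_of_nonpos hy0 hc ha.le) (not_le.2 h1)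
    refine essSup_lower (E := Ioi t) (S := Ioo t y) measurableSet_Ioi
      (fun x hx => hx.1)
      (by rw [Real.volume_Ioo]; exact (ENNReal.ofReal_pos.2 (by linarith)).ne')
      (f := fun x => ENNReal.ofReal (x ^ a)) ?_
    intro x hx
    have hxa : m < x ^ a := by
      rw [← hya]; exact Real.rpow_lt_rpow_of_neg (ht.trans hx.1) hx.2 ha
    exact (ENNReal.lt_ofReal_iff_toReal_lt hsne).2 (hsm.trans hxa)

lemma ess_Ioi_top {a t : ℝ} (ha : 0 < a) (ht : 0 < t) :
    essSup (fun x => ENNReal.ofReal (x ^ a)) (volume.restrict (Ioi t)) = ⊤ := by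
  by_contra h
  set s := essSup (fun x => ENNReal.ofReal (x ^ a)) (volume.restrict (Ioi t)) with hs
  have hsne : s ≠ ⊤ := h
  set M : ℝ := s.toReal + 1 with hM
  have hM0 : 0 < M := by have := ENNReal.toReal_nonneg (a := s); positivity
  set y : ℝ := max t (M ^ (1/a)) with hy
  have hy0 : 0 < M ^ (1/a) := Real.rpow_pos_of_pos hM0 _
  have hya : (M ^ (1/a)) ^ a = M := by
    rw [← Real.rpow_mul hM0.le, one_div, inv_mul_cancel₀ ha.ne', Real.rpow_one]
  refine essSup_lower (E := Ioi t) (S := Ioi y) measurableSet_Ioi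
    (fun x hx => show t < x from lt_of_le_of_lt (le_max_left _ _) hx)
    (by rw [Real.volume_Ioi]; exact ENNReal.top_ne_zero)
    (f := fun x => ENNReal.ofReal (x ^ a)) ?_
  intro x hx
  have hxy : M ^ (1/a) < x := lt_of_le_of_lt (le_max_right t _) hx
  have hxa : M < x ^ a := by rw [← hya]; exact Real.rpow_lt_rpow hy0.le hxy ha
  refine (ENNReal.lt_ofReal_iff_toReal_lt hsne).2 ?_
  simp only [hM] at hxa; linarith

lemma Lnorm_congr (r : ℝ≥0∞) (f g : ℝ → ℝ) (E : Set ℝ) (hE : MeasurableSet E)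
    (h : ∀ x ∈ E, f x = g x) : Lnorm r f E = Lnorm r g E := by
  have hae : (fun x => ENNReal.ofReal |f x|) =ᵐ[volume.restrict E]
      fun x => ENNReal.ofReal |g x| := by
    filter_upwards [ae_restrict_mem hE] with x hx
    rw [h x hx]
  unfold Lnorm
  split
  · exact essSup_congr_ae hae
  · rw [lintegral_congr_ae (hae.mono fun x hx => congrArg (· ^ r.toReal) hx)]

lemma toReal_pos_of_ne_top {r : ℝ≥0∞} (hr : 1 ≤ r) (hrt : r ≠ ∞) : 0 < r.toReal :=
  ENNReal.toReal_pos (by intro h; rw [h] at hr; exact absurd hr (by simp)) hrt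

/-- On `Ioo 0 t` / `Ioi t` the integrand reduction. -/
lemma Lnorm_rpow_eq_of_subset_Ioi (r : ℝ≥0∞) (hr : 1 ≤ r) (hrt : r ≠ ∞) (a : ℝ)
    (E : Set ℝ) (hE : MeasurableSet E) (hE0 : E ⊆ Ioi 0) :
    Lnorm r (fun x => x ^ a) E
      = (∫⁻ x in E, ENNReal.ofReal (x ^ (a * r.toReal))) ^ (1 / r.toReal) := by
  unfold Lnorm
  rw [if_neg hrt]
  congr 1
  refine setLIntegral_congr_fun hE ?_
  intro x hx
  dsimp only
  have hx0 : (0:ℝ) < x := hE0 hx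
  rw [abs_of_nonneg (Real.rpow_nonneg hx0.le a),
    ENNReal.ofReal_rpow_of_pos (Real.rpow_pos_of_pos hx0 a),
    ← Real.rpow_mul hx0.le]

lemma Lnorm_rpow_ess_eq (a : ℝ) (E : Set ℝ) (hE : MeasurableSet E)
    (hE0 : E ⊆ Ioi 0) :
    Lnorm ∞ (fun x => x ^ a) E
      = essSup (fun x => ENNReal.ofReal (x ^ a)) (volume.restrict E) := by
  unfold Lnorm
  rw [if_pos rfl]
  refine essSup_congr_ae ?_
  filter_upwards [ae_restrict_mem hE] with x hx
  rw [abs_of_nonneg (Real.rpow_nonneg (le_of_lt (hE0 hx)) a)]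

lemma Lnorm_rpow_Ioo_finite (r : ℝ≥0∞) (hr : 1 ≤ r) (a : ℝ)
    (h : (r = ∞ ∧ 0 ≤ a) ∨ (r ≠ ∞ ∧ -1 < a * r.toReal)) :
    ∃ K : ℝ, 0 < K ∧ ∀ t : ℝ, 0 < t →
      Lnorm r (fun x => x ^ a) (Ioo 0 t) = ENNReal.ofReal (K * t ^ (a + 1 / r.toReal)) := by
  rcases h with ⟨rfl, ha⟩ | ⟨hrt, hc⟩
  · refine ⟨1, one_pos, fun t ht => ?_⟩
    rw [Lnorm_rpow_ess_eq a _ measurableSet_Ioo (fun x hx => hx.1), ess_Ioo ha ht]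
    simp
  · have hr0 : 0 < r.toReal := toReal_pos_of_ne_top hr hrt
    set c : ℝ := a * r.toReal with hcdef
    have h1 : (0:ℝ) < c + 1 := by linarith
    refine ⟨((c+1)⁻¹) ^ (1 / r.toReal), Real.rpow_pos_of_pos (inv_pos.2 h1) _, fun t ht => ?_⟩
    rw [Lnorm_rpow_eq_of_subset_Ioi r hr hrt a _ measurableSet_Ioo (fun x hx => hx.1),
      lint_Ioo hc ht]
    have hX : (0:ℝ) < t ^ (c+1) / (c+1) := by positivity
    rw [ENNReal.ofReal_rpow_of_pos hX]
    congr 1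
    have he : (c + 1) * (1 / r.toReal) = a + 1 / r.toReal := by
      field_simp
      rw [hcdef]; ring
    rw [div_eq_mul_inv, Real.mul_rpow (by positivity) (inv_nonneg.2 h1.le),
      ← Real.rpow_mul ht.le, he, mul_comm]

lemma Lnorm_rpow_Ioo_top (r : ℝ≥0∞) (hr : 1 ≤ r) (a : ℝ)
    (h : ¬ ((r = ∞ ∧ 0 ≤ a) ∨ (r ≠ ∞ ∧ -1 < a * r.toReal))) :
    ∀ t : ℝ, 0 < t → Lnorm r (fun x => x ^ a) (Ioo 0 t) = ⊤ := by
  intro t ht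
  push_neg at h
  by_cases hrt : r = ∞
  · subst hrt
    have ha : a < 0 := h.1 rfl
    rw [Lnorm_rpow_ess_eq a _ measurableSet_Ioo (fun x hx => hx.1), ess_Ioo_top ha ht]
  · have hr0 : 0 < r.toReal := toReal_pos_of_ne_top hr hrt
    have hc : a * r.toReal ≤ -1 := h.2 hrt
    rw [Lnorm_rpow_eq_of_subset_Ioi r hr hrt a _ measurableSet_Ioo (fun x hx => hx.1),
      lint_Ioo_top hc ht, ENNReal.top_rpow_of_pos (by positivity)]

lemma Lnorm_rpow_Ioi_finite (r : ℝ≥0∞) (hr : 1 ≤ r) (a : ℝ)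
    (h : (r = ∞ ∧ a ≤ 0) ∨ (r ≠ ∞ ∧ a * r.toReal < -1)) :
    ∃ K : ℝ, 0 < K ∧ ∀ t : ℝ, 0 < t →
      Lnorm r (fun x => x ^ a) (Ioi t) = ENNReal.ofReal (K * t ^ (a + 1 / r.toReal)) := by
  rcases h with ⟨rfl, ha⟩ | ⟨hrt, hc⟩
  · refine ⟨1, one_pos, fun t ht => ?_⟩
    rw [Lnorm_rpow_ess_eq a _ measurableSet_Ioi (fun x hx => ht.trans hx), ess_Ioi ha ht]
    simp
  · have hr0 : 0 < r.toReal := toReal_pos_of_ne_top hr hrt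
    set c : ℝ := a * r.toReal with hcdef
    have h1 : c + 1 < 0 := by linarith
    refine ⟨((-(c+1))⁻¹) ^ (1 / r.toReal),
      Real.rpow_pos_of_pos (inv_pos.2 (by linarith)) _, fun t ht => ?_⟩
    rw [Lnorm_rpow_eq_of_subset_Ioi r hr hrt a _ measurableSet_Ioi
      (fun x hx => ht.trans hx), lint_Ioi hc ht]
    have hX : (0:ℝ) < -t ^ (c+1) / (c+1) := by
      rw [neg_div]
      have : t ^ (c+1) / (c+1) < 0 := div_neg_of_pos_of_neg (Real.rpow_pos_of_pos ht _) h1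
      linarith
    rw [ENNReal.ofReal_rpow_of_pos hX]
    congr 1
    have hX' : -t ^ (c+1) / (c+1) = t ^ (c+1) * (-(c+1))⁻¹ := by
      rw [div_eq_mul_inv, ← neg_inv, neg_mul_comm]
    have he : (c + 1) * (1 / r.toReal) = a + 1 / r.toReal := by
      field_simp
      rw [hcdef]; ring
    rw [hX', Real.mul_rpow (by positivity) (inv_nonneg.2 (by linarith)),
      ← Real.rpow_mul ht.le, he, mul_comm]

lemma Lnorm_rpow_Ioi_top (r : ℝ≥0∞) (hr : 1 ≤ r) (a : ℝ)
    (h : ¬ ((r = ∞ ∧ a ≤ 0) ∨ (r ≠ ∞ ∧ a * r.toReal < -1))) :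
    ∀ t : ℝ, 0 < t → Lnorm r (fun x => x ^ a) (Ioi t) = ⊤ := by
  intro t ht
  push_neg at h
  by_cases hrt : r = ∞
  · subst hrt
    have ha : 0 < a := h.1 rfl
    rw [Lnorm_rpow_ess_eq a _ measurableSet_Ioi (fun x hx => ht.trans hx), ess_Ioi_top ha ht]
  · have hr0 : 0 < r.toReal := toReal_pos_of_ne_top hr hrt
    have hc : -1 ≤ a * r.toReal := h.2 hrt
    rw [Lnorm_rpow_eq_of_subset_Ioi r hr hrt a _ measurableSet_Ioi (fun x hx => ht.trans hx),
      lint_Ioi_top hc ht, ENNReal.top_rpow_of_pos (by positivity)]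

lemma Lnorm_rpow_Ioo_ne_zero (r : ℝ≥0∞) (hr : 1 ≤ r) (a : ℝ) {t : ℝ} (ht : 0 < t) :
    Lnorm r (fun x => x ^ a) (Ioo 0 t) ≠ 0 := by
  by_cases h : (r = ∞ ∧ 0 ≤ a) ∨ (r ≠ ∞ ∧ -1 < a * r.toReal)
  · obtain ⟨K, hK, hKt⟩ := Lnorm_rpow_Ioo_finite r hr a h
    rw [hKt t ht]
    have : (0:ℝ) < K * t ^ (a + 1 / r.toReal) := by positivity
    exact (ENNReal.ofReal_pos.2 this).ne'
  · rw [Lnorm_rpow_Ioo_top r hr a h t ht]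
    exact ENNReal.top_ne_zero

/-- For power weights `u(x) = x^{-β}`, `v(x) = x^{γ}` and `1 ≤ p ≤ q ≤ ∞`, the first Hardy-type
condition for the Laplace transform implies the second one (for some `n ∈ ℕ`). -/
theorem laplace_power_weights_first_implies_second
    (p q p' : ℝ≥0∞) (hp : 1 ≤ p) (hpq : p ≤ q) (hconj : 1 / p + 1 / p' = 1)
    (β γ : ℝ)
    (h₁ : (⨆ t : Ioi (0 : ℝ),
        Lnorm q (fun x => x ^ (-β)) (Ioo 0 (t : ℝ)) *
          Lnorm p' (fun x => (x ^ γ)⁻¹) (Ioo 0 (1 / (t : ℝ)))) < ⊤) :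
    ∃ n : ℕ, (⨆ t : Ioi (0 : ℝ),
        Lnorm q (fun x => x ^ (-(n : ℝ)) * x ^ (-β)) (Ioi (t : ℝ)) *
          Lnorm p' (fun x => x ^ (-(n : ℝ)) * (x ^ γ)⁻¹) (Ioi (1 / (t : ℝ)))) < ⊤ := by
  have hq1 : 1 ≤ q := hp.trans hpq
  have hp'1 : 1 ≤ p' := by
    have h1 : 1 / p' ≤ 1 := by
      calc 1 / p' ≤ 1 / p + 1 / p' := le_add_self
        _ = 1 := hconj
    rwa [one_div, ENNReal.inv_le_one] at h1
  have hcong₂ : ∀ u : ℝ, 0 < u → Lnorm p' (fun x => (x ^ γ)⁻¹) (Ioo 0 u)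
      = Lnorm p' (fun x => x ^ (-γ)) (Ioo 0 u) := fun u hu =>
    Lnorm_congr _ _ _ _ measurableSet_Ioo fun x hx => (Real.rpow_neg hx.1.le γ).symm
  have hle : ∀ t : Ioi (0:ℝ),
      Lnorm q (fun x => x ^ (-β)) (Ioo 0 (t : ℝ)) *
        Lnorm p' (fun x => (x ^ γ)⁻¹) (Ioo 0 (1 / (t : ℝ))) ≤
      (⨆ t : Ioi (0 : ℝ),
        Lnorm q (fun x => x ^ (-β)) (Ioo 0 (t : ℝ)) *
          Lnorm p' (fun x => (x ^ γ)⁻¹) (Ioo 0 (1 / (t : ℝ)))) := fun t =>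
    le_iSup (fun t : Ioi (0:ℝ) => Lnorm q (fun x => x ^ (-β)) (Ioo 0 (t : ℝ)) *
      Lnorm p' (fun x => (x ^ γ)⁻¹) (Ioo 0 (1 / (t : ℝ)))) t
  -- first condition
  have hcond₁ : (q = ∞ ∧ 0 ≤ -β) ∨ (q ≠ ∞ ∧ -1 < -β * q.toReal) := by
    by_contra hcon
    have htop := Lnorm_rpow_Ioo_top q hq1 (-β) hcon 1 one_pos
    have hne0 : Lnorm p' (fun x => (x ^ γ)⁻¹) (Ioo 0 (1 / (1:ℝ))) ≠ 0 := by
      rw [hcong₂ _ (by norm_num)]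
      exact Lnorm_rpow_Ioo_ne_zero p' hp'1 (-γ) (by norm_num)
    have h2 := hle ⟨1, by norm_num⟩
    rw [show ((⟨1, by norm_num⟩ : Ioi (0:ℝ)) : ℝ) = 1 from rfl, htop,
      ENNReal.top_mul hne0] at h2
    exact absurd (lt_of_le_of_lt h2 h₁) (lt_irrefl _)
  have hcond₂ : (p' = ∞ ∧ 0 ≤ -γ) ∨ (p' ≠ ∞ ∧ -1 < -γ * p'.toReal) := by
    by_contra hcon
    have htop := Lnorm_rpow_Ioo_top p' hp'1 (-γ) hcon 1 one_pos
    have hne0 : Lnorm q (fun x => x ^ (-β)) (Ioo 0 (1:ℝ)) ≠ 0 :=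
      Lnorm_rpow_Ioo_ne_zero q hq1 (-β) one_pos
    have h2 := hle ⟨1, by norm_num⟩
    rw [show ((⟨1, by norm_num⟩ : Ioi (0:ℝ)) : ℝ) = 1 from rfl] at h2
    rw [hcong₂ (1/(1:ℝ)) (by norm_num), show (1/(1:ℝ)) = 1 by norm_num, htop,
      ENNReal.mul_top hne0] at h2
    exact absurd (lt_of_le_of_lt h2 h₁) (lt_irrefl _)
  obtain ⟨K₁, hK₁0, hK₁⟩ := Lnorm_rpow_Ioo_finite q hq1 (-β) hcond₁
  obtain ⟨K₂, hK₂0, hK₂⟩ := Lnorm_rpow_Ioo_finite p' hp'1 (-γ) hcond₂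
  set s₁ : ℝ := -β + 1 / q.toReal with hs₁
  set s₂ : ℝ := -γ + 1 / p'.toReal with hs₂
  -- exponents must match
  have he : s₁ = s₂ := by
    by_contra he0
    have hesub : s₁ - s₂ ≠ 0 := sub_ne_zero.2 he0
    set S := (⨆ t : Ioi (0 : ℝ),
        Lnorm q (fun x => x ^ (-β)) (Ioo 0 (t : ℝ)) *
          Lnorm p' (fun x => (x ^ γ)⁻¹) (Ioo 0 (1 / (t : ℝ)))) with hSdef
    have hSne : S ≠ ⊤ := h₁.ne
    set M : ℝ := S.toReal with hM
    have hM0 : 0 ≤ M := ENNReal.toReal_nonneg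
    set KK : ℝ := K₁ * K₂ with hKK
    have hKK0 : 0 < KK := mul_pos hK₁0 hK₂0
    set B : ℝ := (M + 1) / KK with hB
    have hB0 : 0 < B := by positivity
    set t₀ : ℝ := B ^ (1 / (s₁ - s₂)) with ht₀def
    have ht₀ : 0 < t₀ := Real.rpow_pos_of_pos hB0 _
    have ht₀e : t₀ ^ (s₁ - s₂) = B := by
      rw [ht₀def, ← Real.rpow_mul hB0.le, one_div, inv_mul_cancel₀ hesub, Real.rpow_one]
    have hkey : Lnorm q (fun x => x ^ (-β)) (Ioo 0 t₀) *
        Lnorm p' (fun x => (x ^ γ)⁻¹) (Ioo 0 (1 / t₀)) = ENNReal.ofReal (M + 1) := by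
      rw [hK₁ t₀ ht₀, hcong₂ (1/t₀) (by positivity), hK₂ (1/t₀) (by positivity),
        ← ENNReal.ofReal_mul (by positivity)]
      congr 1
      have h1t : (1/t₀ : ℝ) ^ s₂ = t₀ ^ (-s₂) := by
        rw [one_div, ← Real.rpow_neg_one t₀, ← Real.rpow_mul ht₀.le, neg_one_mul]
      rw [h1t]
      calc K₁ * t₀ ^ s₁ * (K₂ * t₀ ^ (-s₂))
          = KK * (t₀ ^ s₁ * t₀ ^ (-s₂)) := by rw [hKK]; ring
        _ = KK * t₀ ^ (s₁ - s₂) := by rw [← Real.rpow_add ht₀, sub_eq_add_neg]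
        _ = KK * B := by rw [ht₀e]
        _ = M + 1 := mul_div_cancel₀ _ hKK0.ne'
    have h2 := hle ⟨t₀, ht₀⟩
    rw [show ((⟨t₀, ht₀⟩ : Ioi (0:ℝ)) : ℝ) = t₀ from rfl, hkey,
      ← ENNReal.ofReal_toReal hSne, ← hM] at h2
    rw [ENNReal.ofReal_le_ofReal_iff hM0] at h2
    linarith
  -- choose n
  set D : ℝ := max (max (1 / q.toReal - β) (-β)) (max (1 / p'.toReal - γ) (-γ)) with hD
  refine ⟨⌈D⌉₊ + 1, ?_⟩
  set n : ℕ := ⌈D⌉₊ + 1 with hn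
  have hDn : D < (n : ℝ) := by
    calc D ≤ (⌈D⌉₊ : ℝ) := Nat.le_ceil D
      _ < (n : ℝ) := by rw [hn]; push_cast; linarith
  have hn1 : 1 / q.toReal - β < (n:ℝ) := lt_of_le_of_lt (le_trans (le_max_left _ _) (le_max_left _ _)) hDn
  have hn2 : -β < (n:ℝ) := lt_of_le_of_lt (le_trans (le_max_right _ _) (le_max_left _ _)) hDn
  have hn3 : 1 / p'.toReal - γ < (n:ℝ) := lt_of_le_of_lt (le_trans (le_max_left _ _) (le_max_right _ _)) hDn
  have hn4 : -γ < (n:ℝ) := lt_of_le_of_lt (le_trans (le_max_right _ _) (le_max_right _ _)) hDn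
  have hcond₁' : (q = ∞ ∧ (-(n:ℝ) + -β) ≤ 0) ∨ (q ≠ ∞ ∧ (-(n:ℝ) + -β) * q.toReal < -1) := by
    by_cases hqtop : q = ∞
    · exact Or.inl ⟨hqtop, by linarith⟩
    · refine Or.inr ⟨hqtop, ?_⟩
      have hqr : 0 < q.toReal := toReal_pos_of_ne_top hq1 hqtop
      have h2 : 1 < ((n:ℝ) + β) * q.toReal := by
        rw [← div_lt_iff₀ hqr] at *
        linarith [hn1]
      nlinarith
  have hcond₂' : (p' = ∞ ∧ (-(n:ℝ) + -γ) ≤ 0) ∨ (p' ≠ ∞ ∧ (-(n:ℝ) + -γ) * p'.toReal < -1) := by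
    by_cases hptop : p' = ∞
    · exact Or.inl ⟨hptop, by linarith⟩
    · refine Or.inr ⟨hptop, ?_⟩
      have hpr : 0 < p'.toReal := toReal_pos_of_ne_top hp'1 hptop
      have h2 : 1 < ((n:ℝ) + γ) * p'.toReal := by
        rw [← div_lt_iff₀ hpr] at *
        linarith [hn3]
      nlinarith
  obtain ⟨K₁', hK₁0', hK₁'⟩ := Lnorm_rpow_Ioi_finite q hq1 (-(n:ℝ) + -β) hcond₁'
  obtain ⟨K₂', hK₂0', hK₂'⟩ := Lnorm_rpow_Ioi_finite p' hp'1 (-(n:ℝ) + -γ) hcond₂'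
  set s₁' : ℝ := (-(n:ℝ) + -β) + 1 / q.toReal with hs₁'
  set s₂' : ℝ := (-(n:ℝ) + -γ) + 1 / p'.toReal with hs₂'
  have he' : s₁' - s₂' = 0 := by
    rw [hs₁', hs₂']
    have : -β + 1 / q.toReal = -γ + 1 / p'.toReal := he
    linarith
  refine lt_of_le_of_lt (iSup_le ?_) (ENNReal.ofReal_lt_top (r := K₁' * K₂'))
  rintro ⟨t, ht⟩
  rw [mem_Ioi] at ht
  rw [show ((⟨t, by exact ht⟩ : Ioi (0:ℝ)) : ℝ) = t from rfl]
  have hfg₁ : ∀ x ∈ Ioi t, x ^ (-(n:ℝ)) * x ^ (-β) = x ^ (-(n:ℝ) + -β) := fun x hx =>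
    (Real.rpow_add (ht.trans hx) _ _).symm
  have h1t : (0:ℝ) < 1 / t := by positivity
  have hfg₂ : ∀ x ∈ Ioi (1/t), x ^ (-(n:ℝ)) * (x ^ γ)⁻¹ = x ^ (-(n:ℝ) + -γ) := by
    intro x hx
    have hx0 : (0:ℝ) < x := h1t.trans hx
    rw [← Real.rpow_neg hx0.le, ← Real.rpow_add hx0]
  rw [Lnorm_congr q _ _ _ measurableSet_Ioi hfg₁, Lnorm_congr p' _ _ _ measurableSet_Ioi hfg₂,
    hK₁' t ht, hK₂' (1/t) h1t, ← ENNReal.ofReal_mul (by positivity)]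
  refine le_of_eq ?_
  congr 1
  have h1ts : (1/t : ℝ) ^ s₂' = t ^ (-s₂') := by
    rw [one_div, ← Real.rpow_neg_one t, ← Real.rpow_mul ht.le, neg_one_mul]
  rw [h1ts]
  calc K₁' * t ^ s₁' * (K₂' * t ^ (-s₂'))
      = (K₁' * K₂') * (t ^ s₁' * t ^ (-s₂')) := by ring
    _ = (K₁' * K₂') * t ^ (s₁' - s₂') := by rw [← Real.rpow_add ht, sub_eq_add_neg]
    _ = K₁' * K₂' := by rw [he', Real.rpow_zero, mul_one]
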